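/- Let μ ⊢ k and λ ⊢ n with λ/μ a horizontal strip, and let (s, t) be the canonical pair of standard Young tableaux for (μ, λ). Then Σ_{π ∈ C_s} Σ_{π' ∈ C_t} sgn(π)·sgn(π')·1[({πs},{π't}) covers the identity injection] = |C_s| = (μ^⊤)!, where (μ^⊤)! = ∏_j (μ^⊤_j)! and μ^⊤ is the conjugate partition of μ. In particular this signed sum is nonzero. -/

import Mathlib

open scoped Classical

/-- The sequence of parts of a partition of `m`, in weakly decreasing order, indexed from 0
(and equal to `0` beyond the last part): `partFun p i` is the `(i+1)`-st largest part. -/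
noncomputable def partFun {m : ℕ} (p : Nat.Partition m) (i : ℕ) : ℕ :=
  sSup {a | i < Multiset.card (p.parts.filter (fun x => a ≤ x))}

/-- `lam/mu` is a horizontal strip: `mu i ≤ lam i` for all rows `i`, and no column contains
two cells of `lam/mu` (equivalently `lam (i+1) ≤ mu i`). -/
def IsHorizStrip (mu lam : ℕ → ℕ) : Prop :=
  ∀ i, mu i ≤ lam i ∧ lam (i + 1) ≤ mu i

/-- The height of column `j` of the Young diagram with row lengths `mu` (for `mu` weakly
decreasing this is `#{i : mu i > j}`), i.e. the `j`-th part of the conjugate partition. -/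
noncomputable def colHeight (mu : ℕ → ℕ) (j : ℕ) : ℕ :=
  sInf {i | mu i ≤ j}

/-- The row of the (0-indexed) value `v` in the canonical standard Young tableau of shape
`mu`, obtained by inserting `0, 1, …` into the rows from left to right, top to bottom. -/
noncomputable def canonRow (mu : ℕ → ℕ) (v : ℕ) : ℕ :=
  sInf {i | v < ∑ a ∈ Finset.range (i + 1), mu a}

/-- The column of the (0-indexed) value `v` in the canonical standard Young tableau of
shape `mu`. -/
noncomputable def canonCol (mu : ℕ → ℕ) (v : ℕ) : ℕ :=
  v - ∑ a ∈ Finset.range (canonRow mu v), mu a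

/-- The canonical standard Young tableau `s` of shape `mu ⊢ k`, encoded by the position
`(row, column)` of each of the values `0, …, k-1` (0-indexed). -/
noncomputable def canonPosS (mu : ℕ → ℕ) (k : ℕ) : Fin k → ℕ × ℕ :=
  fun v => (canonRow mu (v : ℕ), canonCol mu (v : ℕ))

/-- The (sorted, increasing) list of indices of the columns containing a cell of the
horizontal strip `lam/mu`. -/
noncomputable def stripCols (mu lam : ℕ → ℕ) : List ℕ :=
  ((Finset.range (lam 0)).filter (fun j => colHeight mu j < colHeight lam j)).sort (· ≤ ·)

/-- The canonical standard Young tableau `t` of shape `lam ⊢ n`, obtained from the canonical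
tableau `s` of shape `mu ⊢ k` by filling the cells of the horizontal strip `lam/mu` with the
values `k, …, n-1` (0-indexed) from left to right; encoded by the position of each value. -/
noncomputable def canonPosT (mu lam : ℕ → ℕ) (k n : ℕ) : Fin n → ℕ × ℕ :=
  fun v =>
    if (v : ℕ) < k then (canonRow mu (v : ℕ), canonCol mu (v : ℕ))
    else
      let j := (stripCols mu lam).getD ((v : ℕ) - k) 0
      (colHeight mu j, j)

/-- The column stabilizer `C_u` of a Young tableau `u` encoded by its position function
`pos`: the permutations of the values preserving each column setwise. -/
noncomputable def CStab {m : ℕ} (pos : Fin m → ℕ × ℕ) : Finset (Equiv.Perm (Fin m)) :=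
  Finset.univ.filter fun π => ∀ v, (pos (π v)).2 = (pos v).2

/-- The pair of tabloids `({πs}, {π't})` covers the injection `σ`, where `s, t` are Young
tableaux with position functions `posS, posT` and `π, π'` relabel their values: the value
`i` occupies the cell `posS (π⁻¹ i)` of `πs`, so the condition
`row_{πs}(i) = row_{π't}(σ i)` reads `(posS (π⁻¹ i)).1 = (posT (π'⁻¹ (σ i))).1`. -/
def coversPerm {k n : ℕ} (posS : Fin k → ℕ × ℕ) (posT : Fin n → ℕ × ℕ)
    (π : Equiv.Perm (Fin k)) (π' : Equiv.Perm (Fin n)) (σ : Fin k ↪ Fin n) : Prop :=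
  ∀ i, (posS (π⁻¹ i)).1 = (posT (π'⁻¹ (σ i))).1

/-- The identity injection `[k] ↪ [n]`. -/
def idInj {k n : ℕ} (hkn : k ≤ n) : Fin k ↪ Fin n :=
  ⟨Fin.castLE hkn, Fin.castLE_injective hkn⟩

-- ## Auxiliary lemmas

namespace PF
variable {m : ℕ} (p : Nat.Partition m)

noncomputable def cnt (a : ℕ) : ℕ := Multiset.card (p.parts.filter (fun x => a ≤ x))

lemma cnt_anti : Antitone (cnt p) := fun a b hab => by
  apply Multiset.card_le_card
  apply Multiset.monotone_filter_right
  intro x hx; exact le_trans hab hx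

lemma parts_le {x : ℕ} (hx : x ∈ p.parts) : x ≤ m := by
  rw [← p.parts_sum]; exact Multiset.le_sum_of_mem hx

lemma exists_of_cnt_pos {i a : ℕ} (h : i < cnt p a) : ∃ x ∈ p.parts, a ≤ x := by
  have h0 : p.parts.filter (fun x => a ≤ x) ≠ 0 := by
    intro hc; rw [cnt, hc] at h; simp at h
  rcases Multiset.exists_mem_of_ne_zero h0 with ⟨x, hx⟩
  rw [Multiset.mem_filter] at hx
  exact ⟨x, hx.1, hx.2⟩

lemma bdd (i : ℕ) : BddAbove {a | i < cnt p a} := by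
  refine ⟨m, fun a ha => ?_⟩
  rcases exists_of_cnt_pos p ha with ⟨x, hx1, hx2⟩
  exact le_trans hx2 (parts_le p hx1)

lemma partFun_eq (i : ℕ) : partFun p i = sSup {a | i < cnt p a} := rfl

lemma lt_cnt_iff {i a : ℕ} (ha : 1 ≤ a) : i < cnt p a ↔ a ≤ partFun p i := by
  constructor
  · intro h; exact le_csSup (bdd p i) h
  · intro h
    have hne : {b | i < cnt p b}.Nonempty := by
      by_contra hc
      rw [Set.not_nonempty_iff_eq_empty] at hc
      rw [partFun_eq, hc] at h
      simp at h; omega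
    have hmem := Nat.sSup_mem hne (bdd p i)
    exact lt_of_lt_of_le hmem (cnt_anti p h)

lemma cnt_le_card (a : ℕ) : cnt p a ≤ Multiset.card p.parts :=
  Multiset.card_le_card (Multiset.filter_le _ _)

lemma card_parts_le : Multiset.card p.parts ≤ m := by
  have : Multiset.card p.parts = (p.parts.map (fun _ => 1)).sum := by
    simp [Multiset.sum_map_singleton]
  calc Multiset.card p.parts = (p.parts.map (fun _ => 1)).sum := this
    _ ≤ (p.parts.map id).sum := by
        apply Multiset.sum_map_le_sum_map
        intro x hx; exact p.parts_pos hx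
    _ = p.parts.sum := by rw [Multiset.map_id]
    _ = m := p.parts_sum

lemma partFun_le (i : ℕ) : partFun p i ≤ m := by
  by_cases hne : {a | i < cnt p a}.Nonempty
  · have hmem := Nat.sSup_mem hne (bdd p i)
    rcases exists_of_cnt_pos p hmem with ⟨x, hx1, hx2⟩
    exact le_trans hx2 (parts_le p hx1)
  · rw [Set.not_nonempty_iff_eq_empty] at hne
    rw [partFun_eq, hne]; simp

lemma partFun_eq_zero {i : ℕ} (hi : m ≤ i) : partFun p i = 0 := by
  rw [partFun_eq]
  rw [show {a | i < cnt p a} = (∅ : Set ℕ) from ?_]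
  · exact csSup_empty
  rw [Set.eq_empty_iff_forall_notMem]
  intro a ha
  simp only [Set.mem_setOf_eq] at ha
  have := lt_of_lt_of_le ha (le_trans (cnt_le_card p a) (card_parts_le p))
  omega

lemma partFun_anti : Antitone (partFun p) := by
  intro i j hij
  by_cases h : 1 ≤ partFun p j
  · exact (lt_cnt_iff p h).1 (lt_of_le_of_lt hij ((lt_cnt_iff p h).2 le_rfl))
  · omega

lemma sum_cnt_aux (P : Multiset ℕ) (M : ℕ) (h : ∀ x ∈ P, x ≤ M) :
    ∑ a ∈ Finset.Icc 1 M, Multiset.card (P.filter (fun x => a ≤ x)) = P.sum := by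
  induction P using Multiset.induction with
  | empty => simp
  | cons x P ih =>
    have hx : x ≤ M := h x (Multiset.mem_cons_self x P)
    have hP : ∀ y ∈ P, y ≤ M := fun y hy => h y (Multiset.mem_cons_of_mem hy)
    simp only [Multiset.filter_cons, Multiset.card_add, Finset.sum_add_distrib, ih hP,
      Multiset.sum_cons]
    congr 1
    have : ∀ a, Multiset.card (if a ≤ x then ({x} : Multiset ℕ) else 0) = if a ≤ x then 1 else 0 := by
      intro a; split <;> simp
    simp only [this]
    rw [← Finset.card_filter]
    have : (Finset.Icc 1 M).filter (fun a => a ≤ x) = Finset.Icc 1 x := by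
      ext a; simp only [Finset.mem_filter, Finset.mem_Icc]; omega
    rw [this, Nat.card_Icc]; omega
  



variable {m : ℕ} (p : Nat.Partition m)

lemma sum_partFun : ∑ i ∈ Finset.range m, partFun p i = m := by
  have h1 : ∀ i ∈ Finset.range m, partFun p i =
      ((Finset.Icc 1 m).filter (fun a => a ≤ partFun p i)).card := by
    intro i _
    have : (Finset.Icc 1 m).filter (fun a => a ≤ partFun p i) = Finset.Icc 1 (partFun p i) := by
      ext a
      simp only [Finset.mem_filter, Finset.mem_Icc]
      have := partFun_le p i
      omega
    rw [this, Nat.card_Icc]; omega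
  rw [Finset.sum_congr rfl h1]
  simp only [Finset.card_filter]
  rw [Finset.sum_comm]
  have h2 : ∀ a ∈ Finset.Icc 1 m,
      (∑ i ∈ Finset.range m, if a ≤ partFun p i then 1 else 0) = cnt p a := by
    intro a ha
    rw [Finset.mem_Icc] at ha
    rw [← Finset.card_filter]
    have : (Finset.range m).filter (fun i => a ≤ partFun p i) = Finset.range (cnt p a) := by
      ext i
      simp only [Finset.mem_filter, Finset.mem_range]
      constructor
      · intro ⟨_, h⟩; exact (lt_cnt_iff p ha.1).2 h
      · intro h
        have h3 := lt_of_lt_of_le h (le_trans (cnt_le_card p a) (card_parts_le p))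
        exact ⟨h3, (lt_cnt_iff p ha.1).1 h⟩
    rw [this, Finset.card_range]
  rw [Finset.sum_congr rfl h2]
  have := sum_cnt_aux p.parts m (fun x hx => parts_le p hx)
  show ∑ a ∈ Finset.Icc 1 m, Multiset.card (p.parts.filter (fun x => a ≤ x)) = m
  rw [this, p.parts_sum]



end PF

namespace YD

variable {f : ℕ → ℕ} {K : ℕ}

def Shape (f : ℕ → ℕ) (K : ℕ) : Prop :=
  Antitone f ∧ (∀ i, K ≤ i → f i = 0) ∧ (∑ i ∈ Finset.range K, f i = K)

variable (hf : Shape f K)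

noncomputable def S (f : ℕ → ℕ) (N : ℕ) : ℕ := ∑ i ∈ Finset.range N, f i

lemma S_mono : Monotone (S f) := fun a b hab =>
  Finset.sum_le_sum_of_subset (Finset.range_subset_range.2 hab)

include hf

lemma S_le (N : ℕ) : S f N ≤ K := by
  rcases le_or_gt N K with h | h
  · exact le_trans (S_mono (f := f) h) (le_of_eq hf.2.2)
  · rw [← hf.2.2]
    have : S f N = S f K + ∑ i ∈ Finset.Ico K N, f i := by
      rw [S, S, ← Finset.sum_range_add_sum_Ico _ (le_of_lt h)]
    rw [this]
    have : ∑ i ∈ Finset.Ico K N, f i = 0 :=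
      Finset.sum_eq_zero (fun i hi => hf.2.1 i (Finset.mem_Ico.1 hi).1)
    simp [S, this]

lemma f_le (r : ℕ) : f r ≤ K := by
  rcases Nat.eq_zero_or_pos K with h | h
  · have := hf.2.1 r (by omega); omega
  · calc f r ≤ f 0 := hf.1 (Nat.zero_le r)
      _ = S f 1 := by simp [S]
      _ ≤ K := S_le hf 1

omit hf in
lemma canonRow_def (v : ℕ) : canonRow f v = sInf {i | v < S f (i + 1)} := rfl

lemma canonRow_spec {v : ℕ} (hv : v < K) :
    S f (canonRow f v) ≤ v ∧ v < S f (canonRow f v + 1) := by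
  have hSK : S f K = K := hf.2.2
  have hfK : f K = 0 := hf.2.1 K le_rfl
  have hSK1 : S f (K + 1) = S f K + f K := Finset.sum_range_succ f K
  have hne : {i | v < S f (i + 1)}.Nonempty := ⟨K, by simp only [Set.mem_setOf_eq]; omega⟩
  have h2 : v < S f (canonRow f v + 1) := by rw [canonRow_def]; exact Nat.sInf_mem hne
  refine ⟨?_, h2⟩
  rcases Nat.eq_zero_or_pos (canonRow f v) with h | h
  · rw [h]; simp [S]
  · have h3 : canonRow f v - 1 < sInf {i | v < S f (i + 1)} := by
      rw [← canonRow_def]; omega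
    have hnm := Nat.notMem_of_lt_sInf h3
    simp only [Set.mem_setOf_eq, not_lt] at hnm
    have heq : canonRow f v - 1 + 1 = canonRow f v := by omega
    rw [heq] at hnm
    omega

lemma canonRow_eq {r v : ℕ} (h1 : S f r ≤ v) (h2 : v < S f (r + 1)) : canonRow f v = r := by
  apply le_antisymm
  · rw [canonRow_def]; exact Nat.sInf_le h2
  · by_contra hc
    push_neg at hc
    have hmem : canonRow f v ∈ {i | v < S f (i + 1)} := by
      rw [canonRow_def]; exact Nat.sInf_mem ⟨r, h2⟩
    simp only [Set.mem_setOf_eq] at hmem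
    have : S f (canonRow f v + 1) ≤ S f r := S_mono (by omega)
    omega

omit hf in
lemma canonCol_eq (v : ℕ) : canonCol f v = v - S f (canonRow f v) := rfl

lemma val_eq {v : ℕ} (hv : v < K) : v = S f (canonRow f v) + canonCol f v := by
  have := canonRow_spec hf hv
  rw [canonCol_eq]; omega

lemma canonCol_lt {v : ℕ} (hv : v < K) : canonCol f v < f (canonRow f v) := by
  have h := canonRow_spec hf hv
  have : S f (canonRow f v + 1) = S f (canonRow f v) + f (canonRow f v) := by
    simp [S, Finset.sum_range_succ]
  rw [canonCol_eq]; omega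

lemma pos_inj {v w : ℕ} (hv : v < K) (hw : w < K)
    (h : canonRow f v = canonRow f w ∧ canonCol f v = canonCol f w) : v = w := by
  rw [val_eq hf hv, val_eq hf hw, h.1, h.2]

lemma cell_to_val {r c : ℕ} (hc : c < f r) :
    ∃ v, v < K ∧ canonRow f v = r ∧ canonCol f v = c := by
  refine ⟨S f r + c, ?_, ?_, ?_⟩
  · have : S f r + c < S f (r + 1) := by simp [S, Finset.sum_range_succ]; omega
    exact lt_of_lt_of_le this (S_le hf _)
  · have h2 : S f r + c < S f (r + 1) := by simp [S, Finset.sum_range_succ]; omega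
    exact canonRow_eq hf (Nat.le_add_right _ _) h2
  · have h2 : S f r + c < S f (r + 1) := by simp [S, Finset.sum_range_succ]; omega
    rw [canonCol_eq, canonRow_eq hf (Nat.le_add_right _ _) h2]
    omega

omit hf in
lemma colHeight_def (j : ℕ) : colHeight f j = sInf {i | f i ≤ j} := rfl

lemma colHeight_char (j r : ℕ) : j < f r ↔ r < colHeight f j := by
  have hne : ∃ i, f i ≤ j := ⟨K, by rw [hf.2.1 K le_rfl]; omega⟩
  constructor
  · intro h
    by_contra hc
    push_neg at hc
    have hmem : colHeight f j ∈ {i | f i ≤ j} := by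
      rw [colHeight_def]; exact Nat.sInf_mem hne
    simp only [Set.mem_setOf_eq] at hmem
    have := hf.1 hc
    omega
  · intro h
    by_contra hc
    push_neg at hc
    have h2 : colHeight f j ≤ r := by rw [colHeight_def]; exact Nat.sInf_le hc
    omega

lemma colHeight_le (j : ℕ) : colHeight f j ≤ K := by
  rw [colHeight_def]; exact Nat.sInf_le (by simp [hf.2.1 K le_rfl])

lemma colHeight_filter (j : ℕ) :
    (Finset.range K).filter (fun r => j < f r) = Finset.range (colHeight f j) := by
  ext r
  simp only [Finset.mem_filter, Finset.mem_range]
  constructor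
  · intro ⟨_, h⟩; exact (colHeight_char hf j r).1 h
  · intro h
    exact ⟨lt_of_lt_of_le h (colHeight_le hf j), (colHeight_char hf j r).2 h⟩

lemma sum_colHeight {N : ℕ} (hN : K ≤ N) : ∑ j ∈ Finset.range N, colHeight f j = K := by
  have h1 : ∀ j ∈ Finset.range N, colHeight f j =
      ((Finset.range K).filter (fun r => j < f r)).card := by
    intro j _; rw [colHeight_filter hf, Finset.card_range]
  rw [Finset.sum_congr rfl h1]
  simp only [Finset.card_filter]
  rw [Finset.sum_comm]
  have h2 : ∀ r ∈ Finset.range K,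
      (∑ j ∈ Finset.range N, if j < f r then 1 else 0) = f r := by
    intro r _
    rw [← Finset.card_filter]
    have : (Finset.range N).filter (fun j => j < f r) = Finset.range (f r) := by
      ext j
      simp only [Finset.mem_filter, Finset.mem_range]
      have : f r ≤ K := f_le hf r
      omega
    rw [this, Finset.card_range]
  rw [Finset.sum_congr rfl h2, hf.2.2]

lemma fiber_card (j : ℕ) :
    (Finset.univ.filter (fun v : Fin K => canonCol f (v : ℕ) = j)).card = colHeight f j := by
  rw [← Finset.card_range (colHeight f j)]
  refine Finset.card_bij (fun v _ => canonRow f (v : ℕ)) ?_ ?_ ?_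
  · intro v hv
    simp only [Finset.mem_filter] at hv
    rw [Finset.mem_range]
    exact (colHeight_char hf j _).1 (hv.2 ▸ canonCol_lt hf v.isLt)
  · intro v hv w hw h
    simp only [Finset.mem_filter] at hv hw
    exact Fin.ext (pos_inj hf v.isLt w.isLt ⟨h, by rw [hv.2, hw.2]⟩)
  · intro r hr
    rw [Finset.mem_range] at hr
    rcases cell_to_val hf ((colHeight_char hf j r).2 hr) with ⟨v, hv, hr', hc'⟩
    refine ⟨⟨v, hv⟩, by simp [Finset.mem_filter, hc'], ?_⟩
    simpa using hr'


omit hf in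
lemma canonCol_le_self (v : ℕ) : canonCol f v ≤ v := Nat.sub_le _ _

lemma cstab_card :
    (CStab (canonPosS f K)).card = ∏ j ∈ Finset.range K, (colHeight f j).factorial := by
  set fc : Fin K → Fin K := fun v => ⟨canonCol f (v : ℕ), lt_of_le_of_lt (canonCol_le_self _) v.isLt⟩ with hfc
  have h1 : (CStab (canonPosS f K)).card = Fintype.card {g : Equiv.Perm (Fin K) // fc ∘ g = fc} := by
    rw [Fintype.card_subtype]
    apply congrArg Finset.card
    ext g
    simp only [CStab, Finset.mem_filter, Finset.mem_univ, true_and]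
    simp only [funext_iff,
      Function.comp_apply, canonPosS, hfc, Fin.ext_iff]
  rw [h1, DomMulAct.stabilizer_card]
  rw [← Fin.prod_univ_eq_prod_range (fun j => (colHeight f j).factorial) K]
  apply Finset.prod_congr rfl
  intro j _
  congr 1
  rw [Fintype.card_subtype, ← fiber_card hf (j : ℕ)]
  apply congrArg Finset.card
  ext v
  simp only [Finset.mem_filter, Finset.mem_univ, true_and, hfc, Fin.ext_iff]


end YD

namespace Strip
open YD

variable {mu lam : ℕ → ℕ} {k n : ℕ}
variable (hmu : Shape mu k) (hlam : Shape lam n) (hkn : k ≤ n)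
  (hstrip : IsHorizStrip mu lam)

include hmu hlam hstrip

lemma colH_mono (j : ℕ) : colHeight mu j ≤ colHeight lam j := by
  by_contra hc
  push_neg at hc
  have h1 : j < mu (colHeight lam j) := (colHeight_char hmu j _).2 hc
  have h2 : mu (colHeight lam j) ≤ lam (colHeight lam j) := (hstrip _).1
  have h3 : colHeight lam j < colHeight lam j := (colHeight_char hlam j _).1 (by omega)
  omega

lemma colH_le_succ (j : ℕ) : colHeight lam j ≤ colHeight mu j + 1 := by
  by_contra hc
  push_neg at hc
  have h1 : j < lam (colHeight mu j + 1) := (colHeight_char hlam j _).2 hc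
  have h2 : lam (colHeight mu j + 1) ≤ mu (colHeight mu j) := (hstrip _).2
  have h3 : ¬ (j < mu (colHeight mu j)) := fun h => by
    have := (colHeight_char hmu j _).1 h; omega
  omega

include hkn

lemma strip_card :
    ((Finset.range n).filter (fun j => colHeight mu j < colHeight lam j)).card = n - k := by
  have h1 : ∀ j ∈ Finset.range n, colHeight lam j =
      colHeight mu j + if colHeight mu j < colHeight lam j then 1 else 0 := by
    intro j _
    have := colH_mono hmu hlam hstrip j
    have := colH_le_succ hmu hlam hstrip j
    split <;> omega
  have h2 : ∑ j ∈ Finset.range n, colHeight lam j = n := sum_colHeight hlam le_rfl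
  have h3 : ∑ j ∈ Finset.range n, colHeight mu j = k := sum_colHeight hmu hkn
  rw [Finset.sum_congr rfl h1, Finset.sum_add_distrib, h3, ← Finset.card_filter] at h2
  omega

lemma stripCols_eq :
    stripCols mu lam =
      (((Finset.range n).filter (fun j => colHeight mu j < colHeight lam j)).sort (· ≤ ·)) := by
  rw [stripCols]
  congr 1
  ext j
  simp only [Finset.mem_filter, Finset.mem_range]
  constructor
  · intro ⟨h1, h2⟩
    exact ⟨lt_of_lt_of_le h1 (f_le hlam 0), h2⟩
  · intro ⟨h1, h2⟩
    refine ⟨?_, h2⟩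
    have h3 : 0 < colHeight lam j := by omega
    exact (colHeight_char hlam j 0).2 h3

lemma stripCols_length : (stripCols mu lam).length = n - k := by
  rw [stripCols_eq hmu hlam hkn hstrip, Finset.length_sort, strip_card hmu hlam hkn hstrip]

lemma stripCols_sorted : (stripCols mu lam).Pairwise (· < ·) := by
  rw [stripCols_eq hmu hlam hkn hstrip]
  exact List.sortedLT_iff_pairwise.1 (Finset.sortedLT_sort _)

lemma stripCols_getD_inj {v w : ℕ} (hv : v < n - k) (hw : w < n - k)
    (h : (stripCols mu lam).getD v 0 = (stripCols mu lam).getD w 0) : v = w := by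
  have hL := stripCols_length hmu hlam hkn hstrip
  have hv' : v < (stripCols mu lam).length := by omega
  have hw' : w < (stripCols mu lam).length := by omega
  rw [List.getD_eq_getElem _ _ hv', List.getD_eq_getElem _ _ hw'] at h
  by_contra hne
  rcases Nat.lt_or_ge v w with hlt | hge
  · have := List.Pairwise.rel_get_of_lt (stripCols_sorted hmu hlam hkn hstrip)
      (show (⟨v, hv'⟩ : Fin _) < ⟨w, hw'⟩ from hlt)
    simp only [List.get_eq_getElem] at this
    omega
  · have hlt : w < v := by omega
    have := List.Pairwise.rel_get_of_lt (stripCols_sorted hmu hlam hkn hstrip)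
      (show (⟨w, hw'⟩ : Fin _) < ⟨v, hv'⟩ from hlt)
    simp only [List.get_eq_getElem] at this
    omega

end Strip

namespace Ext
open YD Strip

variable {k n : ℕ} (hkn : k ≤ n)

/-- The equivalence between `Fin k` and the subtype of `Fin n` of values `< k`. -/
def eqv (hkn : k ≤ n) : Fin k ≃ {v : Fin n // (v : ℕ) < k} where
  toFun i := ⟨Fin.castLE hkn i, i.isLt⟩
  invFun w := ⟨(w.1 : ℕ), w.2⟩
  left_inv i := rfl
  right_inv w := rfl

/-- Extension of a permutation of `Fin k` to `Fin n` by the identity. -/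
noncomputable def E (hkn : k ≤ n) (π : Equiv.Perm (Fin k)) : Equiv.Perm (Fin n) :=
  π.extendDomain (eqv hkn)

lemma E_lt (π : Equiv.Perm (Fin k)) (i : Fin k) :
    E hkn π (Fin.castLE hkn i) = Fin.castLE hkn (π i) := by
  have h : ((Fin.castLE hkn i : Fin n) : ℕ) < k := i.isLt
  rw [E, Equiv.Perm.extendDomain_apply_subtype π (eqv hkn) h]
  rfl

lemma E_ge (π : Equiv.Perm (Fin k)) (v : Fin n) (h : ¬ ((v : ℕ) < k)) :
    E hkn π v = v :=
  Equiv.Perm.extendDomain_apply_not_subtype π (eqv hkn) h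

lemma E_inv (π : Equiv.Perm (Fin k)) : (E hkn π)⁻¹ = E hkn π⁻¹ :=
  Equiv.Perm.extendDomain_inv π (eqv hkn)

lemma E_sign (π : Equiv.Perm (Fin k)) : Equiv.Perm.sign (E hkn π) = Equiv.Perm.sign π :=
  Equiv.Perm.sign_extendDomain π (eqv hkn)

end Ext

section Main
open YD Strip Ext

variable {mu lam : ℕ → ℕ} {k n : ℕ}

lemma posT_lt (hkn : k ≤ n) (i : Fin k) :
    canonPosT mu lam k n (Fin.castLE hkn i) = canonPosS mu k i := by
  simp only [canonPosT, canonPosS, Fin.coe_castLE, i.isLt, if_pos]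

lemma posT_ge (v : Fin n) (h : ¬ ((v : ℕ) < k)) :
    canonPosT mu lam k n v =
      (colHeight mu ((stripCols mu lam).getD ((v : ℕ) - k) 0),
        (stripCols mu lam).getD ((v : ℕ) - k) 0) := by
  simp only [canonPosT, h, if_neg, if_false]

variable (hmu : Shape mu k) (hlam : Shape lam n) (hkn : k ≤ n)
  (hstrip : IsHorizStrip mu lam)

lemma memS_iff (π : Equiv.Perm (Fin k)) :
    π ∈ CStab (canonPosS mu k) ↔ ∀ v, canonCol mu ((π v : Fin k) : ℕ) = canonCol mu (v : ℕ) := by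
  simp only [CStab, Finset.mem_filter, Finset.mem_univ, true_and]
  simp only [canonPosS]

lemma memT_iff (π' : Equiv.Perm (Fin n)) :
    π' ∈ CStab (canonPosT mu lam k n) ↔
      ∀ v, (canonPosT mu lam k n (π' v)).2 = (canonPosT mu lam k n v).2 := by
  simp only [CStab, Finset.mem_filter, Finset.mem_univ, true_and]

include hmu in
lemma E_mem {π : Equiv.Perm (Fin k)} (hπ : π ∈ CStab (canonPosS mu k)) :
    E hkn π ∈ CStab (canonPosT mu lam k n) := by
  rw [memT_iff]
  intro v
  by_cases h : (v : ℕ) < k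
  · have hv : v = Fin.castLE hkn ⟨(v : ℕ), h⟩ := Fin.ext rfl
    rw [hv, E_lt, posT_lt, posT_lt]
    exact (memS_iff π).1 hπ ⟨(v : ℕ), h⟩
  · rw [E_ge _ _ _ h]

include hmu in
lemma E_covers {π : Equiv.Perm (Fin k)} (hπ : π ∈ CStab (canonPosS mu k)) :
    coversPerm (canonPosS mu k) (canonPosT mu lam k n) π (E hkn π) (idInj hkn) := by
  intro i
  have h1 : (E hkn π)⁻¹ (idInj hkn i) = Fin.castLE hkn (π⁻¹ i) := by
    rw [E_inv]
    exact E_lt hkn π⁻¹ i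
  rw [h1, posT_lt]

include hmu hlam hstrip in
lemma covers_unique {π : Equiv.Perm (Fin k)} {π' : Equiv.Perm (Fin n)}
    (hπ : π ∈ CStab (canonPosS mu k)) (hπ' : π' ∈ CStab (canonPosT mu lam k n))
    (hcov : coversPerm (canonPosS mu k) (canonPosT mu lam k n) π π' (idInj hkn)) :
    π' = E hkn π := by
  have hπ'2 := (memT_iff (mu := mu) (lam := lam) π').1 hπ'
  have hπ2 := (memS_iff (mu := mu) π).1 hπ
  -- Step 1
  have step1 : ∀ i : Fin k, π'⁻¹ (Fin.castLE hkn i) = Fin.castLE hkn (π⁻¹ i) := by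
    intro i
    set w := π'⁻¹ (Fin.castLE hkn i) with hw
    have happ : π' w = Fin.castLE hkn i := by rw [hw, Equiv.Perm.coe_inv, Equiv.apply_symm_apply]
    have hcol : (canonPosT mu lam k n w).2 = canonCol mu (i : ℕ) := by
      have := hπ'2 w
      rw [happ, posT_lt] at this
      exact this.symm
    have hrow : (canonPosT mu lam k n w).1 = canonRow mu ((π⁻¹ i : Fin k) : ℕ) :=
      (hcov i).symm
    have hc2 : canonCol mu ((π⁻¹ i : Fin k) : ℕ) = canonCol mu (i : ℕ) := by
      have := hπ2 (π⁻¹ i)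
      rw [Equiv.Perm.coe_inv, Equiv.apply_symm_apply] at this
      exact this.symm
    have hlt : canonCol mu (i : ℕ) < mu (canonRow mu ((π⁻¹ i : Fin k) : ℕ)) :=
      hc2 ▸ canonCol_lt hmu (π⁻¹ i).isLt
    have hrlt : canonRow mu ((π⁻¹ i : Fin k) : ℕ) < colHeight mu (canonCol mu (i : ℕ)) :=
      (colHeight_char hmu _ _).1 hlt
    by_cases h : (w : ℕ) < k
    · have hw' : w = Fin.castLE hkn ⟨(w : ℕ), h⟩ := Fin.ext rfl
      rw [hw', posT_lt] at hcol hrow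
      have hrow' : canonRow mu (w : ℕ) = canonRow mu ((π⁻¹ i : Fin k) : ℕ) := hrow
      have hcol' : canonCol mu (w : ℕ) = canonCol mu (i : ℕ) := hcol
      have hval : (w : ℕ) = ((π⁻¹ i : Fin k) : ℕ) :=
        pos_inj hmu h (π⁻¹ i).isLt ⟨hrow', hcol'.trans hc2.symm⟩
      exact Fin.ext hval
    · have e1 : (canonPosT mu lam k n w).2 = (stripCols mu lam).getD ((w : ℕ) - k) 0 := by
        rw [posT_ge w h]
      have e2 : (canonPosT mu lam k n w).1 =
          colHeight mu ((stripCols mu lam).getD ((w : ℕ) - k) 0) := by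
        rw [posT_ge w h]
      rw [e1] at hcol
      rw [e2] at hrow
      rw [hcol] at hrow
      omega
  -- Step 2
  have step2 : ∀ v : Fin n, ¬ ((v : ℕ) < k) → π'⁻¹ v = v := by
    intro v h
    set w := π'⁻¹ v with hw
    have happ : π' w = v := by rw [hw, Equiv.Perm.coe_inv, Equiv.apply_symm_apply]
    by_cases hwk : (w : ℕ) < k
    · exfalso
      have h1 := step1 (π ⟨(w : ℕ), hwk⟩)
      rw [Equiv.Perm.coe_inv π, Equiv.symm_apply_apply] at h1
      have h2 : Fin.castLE hkn ⟨(w : ℕ), hwk⟩ = w := Fin.ext rfl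
      rw [h2] at h1
      have := π'⁻¹.injective (h1.trans hw)
      have hvk : (v : ℕ) < k := by rw [← this]; exact (π ⟨(w : ℕ), hwk⟩).isLt
      exact h hvk
    · have hcol : (canonPosT mu lam k n w).2 = (canonPosT mu lam k n v).2 := by
        have := hπ'2 w; rw [happ] at this; exact this.symm
      have e1 : (canonPosT mu lam k n w).2 = (stripCols mu lam).getD ((w : ℕ) - k) 0 := by
        rw [posT_ge w hwk]
      have e2 : (canonPosT mu lam k n v).2 = (stripCols mu lam).getD ((v : ℕ) - k) 0 := by
        rw [posT_ge v h]
      rw [e1, e2] at hcol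
      have hwi : (w : ℕ) - k < n - k := by have := w.isLt; omega
      have hvi : (v : ℕ) - k < n - k := by have := v.isLt; omega
      have hik := stripCols_getD_inj hmu hlam hkn hstrip hwi hvi hcol
      have hval : (w : ℕ) = (v : ℕ) := by omega
      exact Fin.ext hval
  -- conclude
  have hinv : π'⁻¹ = (E hkn π)⁻¹ := by
    apply Equiv.ext
    intro v
    by_cases h : (v : ℕ) < k
    · have hv : v = Fin.castLE hkn ⟨(v : ℕ), h⟩ := Fin.ext rfl
      rw [E_inv, hv, step1, E_lt]
    · rw [E_inv, E_ge _ _ _ h, step2 v h]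
  exact inv_injective hinv

end Main

/-- For the canonical pair `(s, t)` of standard Young tableaux for `(μ, λ)` (`μ ⊢ k`,
`λ ⊢ n`, `λ/μ` a horizontal strip), the signed sum
`Σ_{π ∈ C_s} Σ_{π' ∈ C_t} sgn(π)·sgn(π')·1[({πs},{π't}) covers the identity injection]`
equals `|C_s| = (μ^⊤)! = ∏_j (μ^⊤_j)!`; in particular it is nonzero. -/
theorem stmt_6 (k n : ℕ) (hkn : k ≤ n) (mu : Nat.Partition k) (lam : Nat.Partition n)
    (hstrip : IsHorizStrip (partFun mu) (partFun lam)) :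
    (∑ π ∈ CStab (canonPosS (partFun mu) k),
        ∑ π' ∈ CStab (canonPosT (partFun mu) (partFun lam) k n),
          (Equiv.Perm.sign π : ℤ) * (Equiv.Perm.sign π' : ℤ) *
            (if coversPerm (canonPosS (partFun mu) k)
                (canonPosT (partFun mu) (partFun lam) k n) π π' (idInj hkn)
              then 1 else 0)) = ((CStab (canonPosS (partFun mu) k)).card : ℤ) ∧
    (CStab (canonPosS (partFun mu) k)).card =
      ∏ j ∈ Finset.range k, Nat.factorial (colHeight (partFun mu) j) := by
  have hmu : YD.Shape (partFun mu) k :=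
    ⟨PF.partFun_anti mu, fun i hi => PF.partFun_eq_zero mu hi, PF.sum_partFun mu⟩
  have hlam : YD.Shape (partFun lam) n :=
    ⟨PF.partFun_anti lam, fun i hi => PF.partFun_eq_zero lam hi, PF.sum_partFun lam⟩
  constructor
  · have main : ∀ π ∈ CStab (canonPosS (partFun mu) k),
        (∑ π' ∈ CStab (canonPosT (partFun mu) (partFun lam) k n),
          (Equiv.Perm.sign π : ℤ) * (Equiv.Perm.sign π' : ℤ) *
            (if coversPerm (canonPosS (partFun mu) k)
                (canonPosT (partFun mu) (partFun lam) k n) π π' (idInj hkn)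
              then 1 else 0)) = 1 := by
      intro π hπ
      refine (Finset.sum_eq_single_of_mem (Ext.E hkn π) (E_mem hmu hkn hπ) ?_).trans ?_
      · intro b hb hne
        rw [if_neg (fun hc => hne (covers_unique hmu hlam hkn hstrip hπ hb hc)), mul_zero]
      · rw [if_pos (E_covers hmu hkn hπ), Ext.E_sign, mul_one, ← Units.val_mul,
          Int.units_mul_self, Units.val_one]
    rw [Finset.sum_congr rfl main, Finset.sum_const, nsmul_eq_mul, mul_one]
  · exact YD.cstab_card hmu
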